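/- Let (Δ_E, Δ_V, δ_V) and (Δ'_E, Δ'_V, δ'_V) be two Lie coalgebraic extending structures of a Lie coalgebra (g, δ_g) by V, with unified co-products g ♮^c V and g ♮^{c'} V. For linear maps p : V → g and q : V → V, define φ_{p,q} : g ⊕ V → g ⊕ V by φ_{p,q}(a + x) = a + p(x) + q(x). Then φ_{p,q} is a homomorphism of Lie coalgebras from g ♮^c V to g ♮^{c'} V if and only if for all x ∈ V: (1) δ_g(p(x)) + Δ'_V(q(x)) = (I⊗p)Δ_E(x) − (p⊗I)τΔ_E(x) + (p⊗p)δ_V(x) + Δ_V(x); (2) Δ'_E(q(x)) = (I⊗q)Δ_E(x) + (p⊗q)δ_V(x); (3) δ'_V(q(x)) = (q⊗q)δ_V(x). Moreover, φ_{p,q} is an isomorphism if and only if q is a linear isomorphism. -/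

import Mathlib

open TensorProduct LinearMap

noncomputable section

/-- The flip `A ⊗ B → B ⊗ A`. -/
def flipT (k A B : Type*) [Field k] [AddCommGroup A] [Module k A]
    [AddCommGroup B] [Module k B] : A ⊗[k] B →ₗ[k] B ⊗[k] A :=
  (TensorProduct.comm k A B).toLinearMap

/-- Swap of the first two tensor factors `A ⊗ (B ⊗ C) → B ⊗ (A ⊗ C)`. -/
def swap12 (k A B C : Type*) [Field k] [AddCommGroup A] [Module k A]
    [AddCommGroup B] [Module k B] [AddCommGroup C] [Module k C] :
    A ⊗[k] (B ⊗[k] C) →ₗ[k] B ⊗[k] (A ⊗[k] C) :=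
  (TensorProduct.assoc k B A C).toLinearMap ∘ₗ
    rTensor C (flipT k A B) ∘ₗ (TensorProduct.assoc k A B C).symm.toLinearMap

/-- Associator as a linear map. -/
def asr (k A B C : Type*) [Field k] [AddCommGroup A] [Module k A]
    [AddCommGroup B] [Module k B] [AddCommGroup C] [Module k C] :
    (A ⊗[k] B) ⊗[k] C →ₗ[k] A ⊗[k] (B ⊗[k] C) :=
  (TensorProduct.assoc k A B C).toLinearMap

/-- `δ : M → M ⊗ M` is a Lie coalgebra structure: anti-cocommutativity and co-Jacobi. -/
def IsLieCoalgebra {k M : Type*} [Field k] [AddCommGroup M] [Module k M]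
    (δ : M →ₗ[k] M ⊗[k] M) : Prop :=
  (∀ m, flipT k M M (δ m) = - δ m) ∧
  (∀ m, lTensor M δ (δ m) - swap12 k M M M (lTensor M δ (δ m)) =
      asr k M M M (rTensor M δ (δ m)))

/-- A (bilinear) map `b` is a Lie bracket: alternating and Jacobi (in Leibniz form). -/
def IsLieBracket {k L : Type*} [Field k] [AddCommGroup L] [Module k L]
    (b : L →ₗ[k] L →ₗ[k] L) : Prop :=
  (∀ a, b a a = 0) ∧ (∀ a c d, b a (b c d) = b (b a c) d + b c (b a d))

/-- The adjoint action of `a` on `L ⊗ L`: `a.(Σ b₁⊗b₂) = Σ [a,b₁]⊗b₂ + b₁⊗[a,b₂]`. -/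
def adT {k L : Type*} [Field k] [AddCommGroup L] [Module k L]
    (b : L →ₗ[k] L →ₗ[k] L) (a : L) : L ⊗[k] L →ₗ[k] L ⊗[k] L :=
  rTensor L (b a) + lTensor L (b a)

/-- `(L, b, δ)` is a Lie bialgebra. -/
def IsLieBialgebra {k L : Type*} [Field k] [AddCommGroup L] [Module k L]
    (b : L →ₗ[k] L →ₗ[k] L) (δ : L →ₗ[k] L ⊗[k] L) : Prop :=
  IsLieBracket b ∧ IsLieCoalgebra δ ∧
    ∀ a c, δ (b a c) = adT b a (δ c) - adT b c (δ a)

variable {k g V : Type*} [Field k] [CharZero k]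
  [AddCommGroup g] [Module k g] [AddCommGroup V] [Module k V]

/-- The unified co-product map on `E = g ⊕ V`:
`δ_E(a + x) = δ_g(a) + Δ_E(x) − τΔ_E(x) + Δ_V(x) + δ_V(x)`. -/
def uniCoprod (δg : g →ₗ[k] g ⊗[k] g) (ΔE : V →ₗ[k] g ⊗[k] V)
    (ΔV : V →ₗ[k] g ⊗[k] g) (δV : V →ₗ[k] V ⊗[k] V) :
    (g × V) →ₗ[k] (g × V) ⊗[k] (g × V) :=
  map (inl k g V) (inl k g V) ∘ₗ δg ∘ₗ fst k g V +
    (map (inl k g V) (inr k g V) ∘ₗ ΔE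
      - map (inr k g V) (inl k g V) ∘ₗ flipT k g V ∘ₗ ΔE
      + map (inl k g V) (inl k g V) ∘ₗ ΔV
      + map (inr k g V) (inr k g V) ∘ₗ δV) ∘ₗ snd k g V

/-- Conditions (CLE1)–(CLE5): `(Δ_E, Δ_V, δ_V)` is a Lie coalgebraic extending
structure of `(g, δ_g)` by `V`. -/
def IsCoalgExtStructure (δg : g →ₗ[k] g ⊗[k] g) (ΔE : V →ₗ[k] g ⊗[k] V)
    (ΔV : V →ₗ[k] g ⊗[k] g) (δV : V →ₗ[k] V ⊗[k] V) : Prop :=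
  -- (CLE1)
  (∀ x, flipT k g g (ΔV x) = - ΔV x) ∧ (∀ x, flipT k V V (δV x) = - δV x) ∧
  -- (CLE2)
  (∀ x, lTensor g ΔV (ΔE x) + lTensor g δg (ΔV x)
      - swap12 k g g g (lTensor g ΔV (ΔE x)) - swap12 k g g g (lTensor g δg (ΔV x)) =
      - asr k g g g (rTensor g ΔV (flipT k g V (ΔE x)))
      + asr k g g g (rTensor g δg (ΔV x))) ∧
  -- (CLE3)
  (∀ x, lTensor g ΔE (ΔE x) - swap12 k g g V (lTensor g ΔE (ΔE x)) =
      asr k g g V (rTensor V δg (ΔE x)) + asr k g g V (rTensor V ΔV (δV x))) ∧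
  -- (CLE4)
  (∀ x, lTensor g δV (ΔE x) - swap12 k V g V (lTensor V ΔE (δV x)) =
      asr k g V V (rTensor V ΔE (δV x))) ∧
  -- (CLE5)
  (∀ x, lTensor V δV (δV x) - swap12 k V V V (lTensor V δV (δV x)) =
      asr k V V V (rTensor V δV (δV x)))

end
noncomputable section
variable {k g V : Type*} [Field k] [CharZero k]
  [AddCommGroup g] [Module k g] [AddCommGroup V] [Module k V]

/-- The map `φ_{p,q} : g ⊕ V → g ⊕ V`, `φ_{p,q}(a + x) = a + p(x) + q(x)`. -/
def phiPQ (k : Type*) [Field k] {g V : Type*} [AddCommGroup g] [Module k g]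
    [AddCommGroup V] [Module k V] (p : V →ₗ[k] g) (q : V →ₗ[k] V) :
    (g × V) →ₗ[k] (g × V) :=
  (fst k g V + p ∘ₗ snd k g V).prod (q ∘ₗ snd k g V)


section Helpers

variable {k g V : Type*} [Field k]
  [AddCommGroup g] [Module k g] [AddCommGroup V] [Module k V]

private lemma map_map' {M N P Q P' Q' : Type*} [AddCommGroup M] [Module k M]
    [AddCommGroup N] [Module k N] [AddCommGroup P] [Module k P]
    [AddCommGroup Q] [Module k Q] [AddCommGroup P'] [Module k P']
    [AddCommGroup Q'] [Module k Q'] (f : P →ₗ[k] P') (h : Q →ₗ[k] Q')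
    (f' : M →ₗ[k] P) (h' : N →ₗ[k] Q) (t : M ⊗[k] N) :
    map f h (map f' h' t) = map (f ∘ₗ f') (h ∘ₗ h') t :=
  (DFunLike.congr_fun (TensorProduct.map_comp f h f' h') t).symm

private lemma flipT_map {A B C D : Type*} [AddCommGroup A] [Module k A]
    [AddCommGroup B] [Module k B] [AddCommGroup C] [Module k C]
    [AddCommGroup D] [Module k D] (f : A →ₗ[k] C) (h : B →ₗ[k] D) (t : A ⊗[k] B) :
    flipT k C D (map f h t) = map h f (flipT k A B t) := by
  induction t using TensorProduct.induction_on with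
  | zero => simp
  | tmul a b => simp [flipT]
  | add x y hx hy => simp [hx, hy]

private lemma flipT_lTensor {A B D : Type*} [AddCommGroup A] [Module k A]
    [AddCommGroup B] [Module k B] [AddCommGroup D] [Module k D]
    (h : B →ₗ[k] D) (t : A ⊗[k] B) :
    flipT k A D (lTensor A h t) = rTensor A h (flipT k A B t) := by
  induction t using TensorProduct.induction_on with
  | zero => simp
  | tmul a b => simp [flipT]
  | add x y hx hy => simp [hx, hy]

private lemma uC_apply (δg : g →ₗ[k] g ⊗[k] g) (ΔE : V →ₗ[k] g ⊗[k] V)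
    (ΔV : V →ₗ[k] g ⊗[k] g) (δV : V →ₗ[k] V ⊗[k] V) (a : g) (x : V) :
    uniCoprod δg ΔE ΔV δV (a, x) =
      map (inl k g V) (inl k g V) (δg a) + map (inl k g V) (inr k g V) (ΔE x)
        - map (inr k g V) (inl k g V) (flipT k g V (ΔE x))
        + map (inl k g V) (inl k g V) (ΔV x)
        + map (inr k g V) (inr k g V) (δV x) := by
  simp [uniCoprod]
  abel

private lemma phi_apply (p : V →ₗ[k] g) (q : V →ₗ[k] V) (a : g) (x : V) :
    phiPQ k p q (a, x) = (a + p x, q x) := rfl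

private lemma P1 (p : V →ₗ[k] g) (q : V →ₗ[k] V) (s : g ⊗[k] g) :
    map (phiPQ k p q) (phiPQ k p q) (map (inl k g V) (inl k g V) s) =
      map (inl k g V) (inl k g V) s := by
  induction s using TensorProduct.induction_on with
  | zero => simp
  | tmul a b => simp [phiPQ]
  | add x y hx hy => simp [hx, hy]

private lemma P2 (p : V →ₗ[k] g) (q : V →ₗ[k] V) (s : g ⊗[k] V) :
    map (phiPQ k p q) (phiPQ k p q) (map (inl k g V) (inr k g V) s) =
      map (inl k g V) (inl k g V) (lTensor g p s)
        + map (inl k g V) (inr k g V) (lTensor g q s) := by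
  induction s using TensorProduct.induction_on with
  | zero => simp
  | tmul a b =>
      simp only [map_tmul, lTensor_tmul, inl_apply, inr_apply, phi_apply]
      rw [← tmul_add]
      congr 1 <;> simp
  | add x y hx hy => simp [tmul_add, hx, hy]; abel

private lemma P3 (p : V →ₗ[k] g) (q : V →ₗ[k] V) (s : V ⊗[k] g) :
    map (phiPQ k p q) (phiPQ k p q) (map (inr k g V) (inl k g V) s) =
      map (inl k g V) (inl k g V) (rTensor g p s)
        + map (inr k g V) (inl k g V) (rTensor g q s) := by
  induction s using TensorProduct.induction_on with
  | zero => simp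
  | tmul a b =>
      simp only [map_tmul, rTensor_tmul, inl_apply, inr_apply, phi_apply]
      rw [← add_tmul]
      congr 1 <;> simp
  | add x y hx hy => simp [add_tmul, hx, hy]; abel

private lemma P4 (p : V →ₗ[k] g) (q : V →ₗ[k] V) (s : V ⊗[k] V) :
    map (phiPQ k p q) (phiPQ k p q) (map (inr k g V) (inr k g V) s) =
      map (inl k g V) (inl k g V) (map p p s)
        + map (inl k g V) (inr k g V) (map p q s)
        + map (inr k g V) (inl k g V) (map q p s)
        + map (inr k g V) (inr k g V) (map q q s) := by
  induction s using TensorProduct.induction_on with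
  | zero => simp
  | tmul a b =>
      simp only [map_tmul, inl_apply, inr_apply, phi_apply]
      have h1 : ((0 : g) + p a, q a) = ((p a, 0) + ((0 : g), q a) : g × V) := by simp
      have h2 : ((0 : g) + p b, q b) = ((p b, 0) + ((0 : g), q b) : g × V) := by simp
      rw [h1, h2, add_tmul, tmul_add, tmul_add]
      abel
  | add x y hx hy => simp [add_tmul, tmul_add, hx, hy]; abel

private lemma map_phi_uC (δg : g →ₗ[k] g ⊗[k] g) (ΔE : V →ₗ[k] g ⊗[k] V)
    (ΔV : V →ₗ[k] g ⊗[k] g) (δV : V →ₗ[k] V ⊗[k] V)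
    (p : V →ₗ[k] g) (q : V →ₗ[k] V) (a : g) (x : V) :
    map (phiPQ k p q) (phiPQ k p q) (uniCoprod δg ΔE ΔV δV (a, x)) =
      map (inl k g V) (inl k g V)
          (δg a + ΔV x + lTensor g p (ΔE x) - rTensor g p (flipT k g V (ΔE x))
            + map p p (δV x))
        + map (inl k g V) (inr k g V) (lTensor g q (ΔE x) + map p q (δV x))
        + map (inr k g V) (inl k g V)
            (- rTensor g q (flipT k g V (ΔE x)) + map q p (δV x))
        + map (inr k g V) (inr k g V) (map q q (δV x)) := by
  rw [uC_apply]
  simp only [map_add, map_sub, map_neg, P1, P2, P3, P4]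
  abel

end Helpers


/-- **Lemma.** For two Lie coalgebraic extending structures of `(g, δ_g)` by `V`,
`φ_{p,q}` is a morphism of Lie coalgebras between the unified co-products iff
conditions (1)–(3) hold; moreover `φ_{p,q}` is an isomorphism iff `q` is a linear
isomorphism. -/
theorem coalgHom_iff_pq (δg : g →ₗ[k] g ⊗[k] g) (hδg : IsLieCoalgebra δg)
    (ΔE : V →ₗ[k] g ⊗[k] V) (ΔV : V →ₗ[k] g ⊗[k] g) (δV : V →ₗ[k] V ⊗[k] V)
    (ΔE' : V →ₗ[k] g ⊗[k] V) (ΔV' : V →ₗ[k] g ⊗[k] g) (δV' : V →ₗ[k] V ⊗[k] V)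
    (hΩ : IsCoalgExtStructure δg ΔE ΔV δV)
    (hΩ' : IsCoalgExtStructure δg ΔE' ΔV' δV')
    (p : V →ₗ[k] g) (q : V →ₗ[k] V) :
    ((∀ e, map (phiPQ k p q) (phiPQ k p q) (uniCoprod δg ΔE ΔV δV e) =
        uniCoprod δg ΔE' ΔV' δV' (phiPQ k p q e)) ↔
      (∀ x, δg (p x) + ΔV' (q x) =
          lTensor g p (ΔE x) - rTensor g p (flipT k g V (ΔE x))
            + map p p (δV x) + ΔV x) ∧
      (∀ x, ΔE' (q x) = lTensor g q (ΔE x) + map p q (δV x)) ∧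
      (∀ x, δV' (q x) = map q q (δV x))) ∧
    (Function.Bijective (phiPQ k p q) ↔ Function.Bijective q) := by
  constructor
  · constructor
    · intro h
      refine ⟨fun x => ?_, fun x => ?_, fun x => ?_⟩
      · have hx := h (0, x)
        rw [map_phi_uC, phi_apply, uC_apply] at hx
        have h11 := congrArg (map (fst k g V) (fst k g V)) hx
        simp [map_map', ← LinearMap.comp_assoc] at h11
        rw [← h11]
        simp only [LinearMap.lTensor, LinearMap.rTensor]
        abel
      · have hx := h (0, x)
        rw [map_phi_uC, phi_apply, uC_apply] at hx
        have h12 := congrArg (map (fst k g V) (snd k g V)) hx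
        simp [map_map', ← LinearMap.comp_assoc] at h12
        rw [← h12]
        rfl
      · have hx := h (0, x)
        rw [map_phi_uC, phi_apply, uC_apply] at hx
        have h22 := congrArg (map (snd k g V) (snd k g V)) hx
        simp [map_map', ← LinearMap.comp_assoc] at h22
        rw [← h22]
    · rintro ⟨h1, h2, h3⟩ ⟨a, x⟩
      have hC : flipT k g V (ΔE' (q x)) =
          rTensor g q (flipT k g V (ΔE x)) - map q p (δV x) := by
        rw [h2 x, map_add, flipT_lTensor, flipT_map, hΩ.2.1 x, map_neg,
          ← sub_eq_add_neg]
      have hV' : ΔV' (q x) = lTensor g p (ΔE x) - rTensor g p (flipT k g V (ΔE x))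
          + map p p (δV x) + ΔV x - δg (p x) := by rw [← h1 x]; abel
      rw [map_phi_uC, phi_apply, uC_apply, hC, hV', h2 x, h3 x]
      simp only [map_add, map_sub, map_neg]
      abel
  · constructor
    · intro hb
      constructor
      · intro x y hxy
        have h1 : phiPQ k p q (-(p x), x) = phiPQ k p q (-(p y), y) := by
          simp [phi_apply, hxy]
        exact congrArg Prod.snd (hb.1 h1)
      · intro y
        obtain ⟨e, he⟩ := hb.2 ((0 : g), y)
        exact ⟨e.2, congrArg Prod.snd he⟩
    · intro hq
      set hinv := LinearEquiv.ofBijective q hq with hhinv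
      refine Function.bijective_iff_has_inverse.mpr
        ⟨fun z => (z.1 - p (hinv.symm z.2), hinv.symm z.2), ?_, ?_⟩
      · rintro ⟨a, x⟩
        have hx : hinv.symm (q x) = x := hinv.symm_apply_apply x
        simp [phi_apply, hx]
      · rintro ⟨a, x⟩
        have hx : q (hinv.symm x) = x := hinv.apply_symm_apply x
        simp [phi_apply, hx]


end
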